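/- The function ρ ↦ (1+ρ)·log Σ_{z∈Z} p(z)^{1/(1+ρ)} is differentiable at every ρ > −1, with derivative at ρ equal to H(p^ρ), the entropy of the tilted distribution p^ρ. -/

import Mathlib

open scoped BigOperators

noncomputable section

/-- `q` is a probability mass function on `Z`. -/
def IsPMF {Z : Type*} [Fintype Z] (q : Z → ℝ) : Prop :=
  (∀ z, 0 ≤ q z) ∧ ∑ z, q z = 1

/-- Shannon entropy in nats. -/
def entropy {Z : Type*} [Fintype Z] (q : Z → ℝ) : ℝ :=
  - ∑ z, q z * Real.log (q z)

/-- The tilted distribution `p^ρ(z) = p(z)^{1/(1+ρ)} / Σ_s p(s)^{1/(1+ρ)}`. -/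
def tilted {Z : Type*} [Fintype Z] (p : Z → ℝ) (ρ : ℝ) : Z → ℝ :=
  fun z => p z ^ (1 / (1 + ρ)) / ∑ s, p s ^ (1 / (1 + ρ))

/-- Lemma 14: `d/dρ [(1+ρ) log Σ_z p(z)^{1/(1+ρ)}] = H(p^ρ)`. -/
theorem statement14 {Z : Type*} [Fintype Z] [Nonempty Z]
    (p : Z → ℝ) (hp : IsPMF p) (hpos : ∀ z, 0 < p z) (ρ : ℝ) (hρ : -1 < ρ) :
    HasDerivAt (fun σ : ℝ => (1 + σ) * Real.log (∑ z, p z ^ (1 / (1 + σ))))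
      (entropy (tilted p ρ)) ρ := by
  have ht : (0:ℝ) < 1 + ρ := by linarith
  set t : ℝ := 1 + ρ with htdef
  set u : ℝ := 1 / t with hudef
  set S : ℝ := ∑ z, p z ^ u with hSdef
  have hS : 0 < S := Finset.sum_pos (fun z _ => Real.rpow_pos_of_pos (hpos z) u)
    Finset.univ_nonempty
  have h1 : HasDerivAt (fun σ : ℝ => 1 + σ) 1 ρ := by
    simpa using (hasDerivAt_id ρ).const_add (1:ℝ)
  have hg : HasDerivAt (fun σ : ℝ => 1 / (1 + σ)) (-(1 / t ^ 2)) ρ := by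
    simpa [one_div, neg_div] using h1.fun_inv ht.ne'
  have hcomp : ∀ z, HasDerivAt (fun σ : ℝ => p z ^ (1 / (1 + σ)))
      (p z ^ u * Real.log (p z) * (-(1 / t ^ 2))) ρ := fun z => by
    have := (Real.hasStrictDerivAt_const_rpow (hpos z) u).hasDerivAt.comp ρ hg
    simpa [Function.comp_def] using this
  have hsum : HasDerivAt (fun σ : ℝ => ∑ z, p z ^ (1 / (1 + σ)))
      (∑ z, p z ^ u * Real.log (p z) * (-(1 / t ^ 2))) ρ :=
    HasDerivAt.fun_sum fun z _ => hcomp z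
  have hlog : HasDerivAt (fun σ : ℝ => Real.log (∑ z, p z ^ (1 / (1 + σ))))
      ((∑ z, p z ^ u * Real.log (p z) * (-(1 / t ^ 2))) / S) ρ := by
    have := hsum.log hS.ne'
    simpa [hSdef, hudef, htdef] using this
  have hmul : HasDerivAt (fun σ : ℝ => (1 + σ) * Real.log (∑ z, p z ^ (1 / (1 + σ)))) _ ρ :=
    h1.fun_mul hlog
  convert hmul using 1
  have hlogq : ∀ z : Z, Real.log (p z ^ u / S) = u * Real.log (p z) - Real.log S := by
    intro z
    rw [Real.log_div (Real.rpow_pos_of_pos (hpos z) u).ne' hS.ne',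
      Real.log_rpow (hpos z)]
  have hsumdiv : (∑ z, p z ^ u) / S = 1 := div_self hS.ne'
  have e1 : (∑ z, p z ^ u / S * Real.log (p z ^ u / S))
      = u * ((∑ z, p z ^ u * Real.log (p z)) / S) - Real.log S := by
    calc (∑ z, p z ^ u / S * Real.log (p z ^ u / S))
        = ∑ z, (u * (p z ^ u * Real.log (p z)) / S - p z ^ u / S * Real.log S) :=
          Finset.sum_congr rfl fun z _ => by rw [hlogq z]; ring
      _ = (∑ z, u * (p z ^ u * Real.log (p z)) / S) - (∑ z, p z ^ u / S) * Real.log S := by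
          rw [Finset.sum_sub_distrib, Finset.sum_mul]
      _ = u * ((∑ z, p z ^ u * Real.log (p z)) / S) - Real.log S := by
          rw [← Finset.sum_div, ← Finset.sum_div, ← Finset.mul_sum, hsumdiv, one_mul,
            mul_div_assoc]
  have e2 : (∑ z, p z ^ u * Real.log (p z) * (-(1 / t ^ 2)))
      = (∑ z, p z ^ u * Real.log (p z)) * (-(1 / t ^ 2)) := by
    rw [Finset.sum_mul]
  simp only [entropy, tilted, hSdef.symm, hudef.symm, htdef.symm]
  have h4 : t * (1 / t ^ 2) = u := by
    rw [hudef, one_div, one_div, pow_two, mul_inv, ← mul_assoc,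
      mul_inv_cancel₀ ht.ne', one_mul]
  rw [e1, e2]
  rw [show t * ((∑ z, p z ^ u * Real.log (p z)) * -(1 / t ^ 2) / S)
      = -(t * (1 / t ^ 2) * ((∑ z, p z ^ u * Real.log (p z)) / S)) from by ring, h4]
  ring
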